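/- In the bivariate zero-inflated Poisson-lognormal model, Cov(Y_j, Y_k) = (1-π_j)(1-π_k) A_j A_k (e^{σ_{jk}} - 1) for j ≠ k, where A_j = exp(μ_j + σ_{jj}/2). -/

import Mathlib

open ProbabilityTheory MeasureTheory
open scoped NNReal ENNReal

/-- The bivariate Gaussian measure on `ℝ × ℝ` with means `μj, μk`, variances
`σjj, σkk` and covariance `σjk`, constructed via the Cholesky factorization from two
independent standard normals (requires `σjj > 0` and `σkk - σjk²/σjj ≥ 0`). -/
noncomputable def bivariateGaussian (μj μk σjj σkk σjk : ℝ) : Measure (ℝ × ℝ) :=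
  Measure.map
    (fun uv : ℝ × ℝ =>
      (μj + Real.sqrt σjj * uv.1,
       μk + σjk / Real.sqrt σjj * uv.1 + Real.sqrt (σkk - σjk ^ 2 / σjj) * uv.2))
    ((gaussianReal 0 1).prod (gaussianReal 0 1))

/-- The joint pmf of `(Y_j, Y_k)` in the bivariate zero-inflated Poisson-lognormal
model: given `(Z_j, Z_k)` bivariate Gaussian and independent `W_j ~ B(πj)`,
`W_k ~ B(πk)`, the counts are conditionally independent with
`Y_j | W, Z ~ W_j δ₀ + (1 - W_j) Poisson(e^{Z_j})`. -/
noncomputable def biZiplnPMF (μj μk σjj σkk σjk πj πk : ℝ) (a b : ℕ) : ℝ :=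
  ∫ z : ℝ × ℝ,
    (πj * (if a = 0 then 1 else 0)
        + (1 - πj) * poissonPMFReal (Real.exp z.1).toNNReal a) *
    (πk * (if b = 0 then 1 else 0)
        + (1 - πk) * poissonPMFReal (Real.exp z.2).toNNReal b)
    ∂(bivariateGaussian μj μk σjj σkk σjk)


lemma pdf_mul_exp (c x : ℝ) :
    gaussianPDFReal 0 1 x * Real.exp (c * x)
      = Real.exp (c ^ 2 / 2) * gaussianPDFReal c 1 x := by
  simp only [gaussianPDFReal, NNReal.coe_one]
  rw [mul_comm, ← mul_assoc, mul_comm (Real.exp (c*x)), mul_assoc, ← Real.exp_add]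
  rw [show c * x + -(x - 0) ^ 2 / (2*1) = c ^ 2 / 2 + -(x - c) ^ 2 / (2*1) by ring,
    Real.exp_add]
  ring

lemma gpdf_fun : gaussianPDF 0 1 = fun x => ((gaussianPDFReal 0 1 x).toNNReal : ℝ≥0∞) := rfl

lemma integrable_exp_std (c : ℝ) :
    Integrable (fun x => Real.exp (c * x)) (gaussianReal 0 1) := by
  rw [gaussianReal_of_var_ne_zero 0 one_ne_zero, gpdf_fun,
     ]
  rw [integrable_withDensity_iff_integrable_smul (E := ℝ) ((measurable_gaussianPDFReal 0 1).real_toNNReal)]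
  have : (fun x => (gaussianPDFReal 0 1 x).toNNReal • Real.exp (c * x))
      = fun x => Real.exp (c ^ 2 / 2) * gaussianPDFReal c 1 x := by
    funext x
    rw [NNReal.smul_def, Real.coe_toNNReal _ (gaussianPDFReal_nonneg 0 1 _), smul_eq_mul,
      pdf_mul_exp]
  rw [this]
  exact (integrable_gaussianPDFReal c 1).const_mul _

lemma integral_exp_std (c : ℝ) :
    ∫ x, Real.exp (c * x) ∂(gaussianReal 0 1) = Real.exp (c ^ 2 / 2) := by
  rw [gaussianReal_of_var_ne_zero 0 one_ne_zero, gpdf_fun,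
    integral_withDensity_eq_integral_smul ((measurable_gaussianPDFReal 0 1).real_toNNReal)]
  simp only [NNReal.smul_def, Real.coe_toNNReal _ (gaussianPDFReal_nonneg 0 1 _), smul_eq_mul]
  simp only [pdf_mul_exp]
  rw [MeasureTheory.integral_const_mul, integral_gaussianPDFReal_eq_one c one_ne_zero, mul_one]


lemma poisson_shift (r : ℝ≥0) (n : ℕ) :
    ((n + 1 : ℕ) : ℝ) * poissonPMFReal r (n + 1) = (r : ℝ) * poissonPMFReal r n := by
  simp only [poissonPMFReal, Nat.factorial_succ, pow_succ]
  push_cast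
  have h1 : (n.factorial : ℝ) ≠ 0 := Nat.cast_ne_zero.mpr n.factorial_ne_zero
  have h2 : ((n : ℝ) + 1) ≠ 0 := by positivity
  field_simp

lemma poisson_mean (r : ℝ≥0) :
    HasSum (fun (n : ℕ) => (n : ℝ) * poissonPMFReal r n) (r : ℝ) := by
  have hs : HasSum (fun n => ((n + 1 : ℕ) : ℝ) * poissonPMFReal r (n + 1)) (r : ℝ) := by
    simp only [poisson_shift]
    simpa using (show HasSum (poissonPMFReal r) 1 from poissonPMFRealSum r).mul_left (r : ℝ)
  have hsum : Summable (fun (n : ℕ) => (n : ℝ) * poissonPMFReal r n) :=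
    (summable_nat_add_iff 1).mp hs.summable
  rw [hsum.hasSum_iff]
  rw [hsum.tsum_eq_zero_add]
  simpa using hs.tsum_eq


noncomputable def zf (π x : ℝ) (a : ℕ) : ℝ :=
  π * (if a = 0 then 1 else 0) + (1 - π) * poissonPMFReal (Real.exp x).toNNReal a

lemma zf_nonneg {π : ℝ} (hπ : π ∈ Set.Icc (0:ℝ) 1) (x : ℝ) (a : ℕ) : 0 ≤ zf π x a := by
  have h1 : (0:ℝ) ≤ π := hπ.1
  have h2 : (0:ℝ) ≤ 1 - π := by linarith [hπ.2]
  have := poissonPMFReal_nonneg (r := (Real.exp x).toNNReal) (n := a)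
  unfold zf; positivity

lemma poisson_le_one (r : ℝ≥0) (a : ℕ) : poissonPMFReal r a ≤ 1 :=
  le_hasSum (poissonPMFRealSum r) a (fun _ _ => poissonPMFReal_nonneg)

lemma zf_le_one {π : ℝ} (hπ : π ∈ Set.Icc (0:ℝ) 1) (x : ℝ) (a : ℕ) : zf π x a ≤ 1 := by
  have h1 : (0:ℝ) ≤ π := hπ.1
  have h2 : (0:ℝ) ≤ 1 - π := by linarith [hπ.2]
  have h3 := poisson_le_one (Real.exp x).toNNReal a
  have h4 : (if a = 0 then (1:ℝ) else 0) ≤ 1 := by split <;> norm_num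
  have h5 : π * (if a = 0 then (1:ℝ) else 0) ≤ π * 1 := by
    apply mul_le_mul_of_nonneg_left h4 h1
  have h6 : (1 - π) * poissonPMFReal (Real.exp x).toNNReal a ≤ (1 - π) * 1 :=
    mul_le_mul_of_nonneg_left h3 h2
  unfold zf; linarith

lemma zf_hasSum (π x : ℝ) : HasSum (zf π x) 1 := by
  have h1 : HasSum (fun a : ℕ => π * (if a = 0 then (1:ℝ) else 0)) π := by
    simpa using (hasSum_ite_eq (0:ℕ) (1:ℝ)).mul_left π
  have h2 := (poissonPMFRealSum (Real.exp x).toNNReal).mul_left (1 - π)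
  have h := h1.add h2
  rw [show π + (1 - π) * 1 = 1 by ring] at h
  exact h

lemma zf_hasSum_mul (π x : ℝ) :
    HasSum (fun a : ℕ => (a : ℝ) * zf π x a) ((1 - π) * Real.exp x) := by
  have h1 : HasSum (fun a : ℕ => (a:ℝ) * (π * (if a = 0 then (1:ℝ) else 0))) 0 := by
    convert hasSum_zero with a
    rcases Nat.eq_zero_or_pos a with h | h
    · simp [h]
    · simp [Nat.pos_iff_ne_zero.mp h]
  have h2 : HasSum (fun a : ℕ => (a:ℝ) * ((1 - π) * poissonPMFReal (Real.exp x).toNNReal a))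
      ((1 - π) * Real.exp x) := by
    have := (poisson_mean (Real.exp x).toNNReal).mul_left (1 - π)
    rw [Real.coe_toNNReal _ (Real.exp_nonneg x)] at this
    convert this using 2 with a
    case e'_3 => rfl
    ring
  have := h1.add h2
  rw [zero_add] at this
  convert this using 2 with a
  unfold zf; ring

lemma zf_measurable (π : ℝ) (a : ℕ) : Measurable (fun x => zf π x a) := by
  unfold zf
  have : (fun x => poissonPMFReal (Real.exp x).toNNReal a)
      = fun x => Real.exp (- Real.exp x) * (Real.exp x) ^ a / a.factorial := by
    funext x
    simp [poissonPMFReal, Real.coe_toNNReal _ (Real.exp_nonneg x)]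
  simp only [show ∀ x:ℝ, poissonPMFReal (Real.exp x).toNNReal a
      = Real.exp (- Real.exp x) * (Real.exp x) ^ a / a.factorial from fun x => congrFun this x]
  apply Measurable.add
  · exact measurable_const
  · apply Measurable.const_mul
    apply Measurable.div_const
    exact (Real.measurable_exp.comp Real.measurable_exp.neg).mul (Real.measurable_exp.pow_const a)

lemma bivariateGaussian_isProb (μj μk σjj σkk σjk : ℝ) :
    IsProbabilityMeasure (bivariateGaussian μj μk σjj σkk σjk) := by
  unfold bivariateGaussian
  have hm : Measurable (fun uv : ℝ × ℝ =>
      (μj + Real.sqrt σjj * uv.1,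
       μk + σjk / Real.sqrt σjj * uv.1 + Real.sqrt (σkk - σjk ^ 2 / σjj) * uv.2)) := by
    fun_prop
  exact Measure.isProbabilityMeasure_map hm.aemeasurable

lemma master (μj μk σjj σkk σjk πj πk : ℝ)
    (hπj : πj ∈ Set.Icc (0:ℝ) 1) (hπk : πk ∈ Set.Icc (0:ℝ) 1)
    (wa wb : ℕ → ℝ) (hwa : ∀ a, 0 ≤ wa a) (hwb : ∀ b, 0 ≤ wb b)
    (Fa Fb : ℝ → ℝ)
    (hFa : ∀ x, HasSum (fun a : ℕ => wa a * zf πj x a) (Fa x))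
    (hFb : ∀ x, HasSum (fun b : ℕ => wb b * zf πk x b) (Fb x))
    (hInt : Integrable (fun z : ℝ × ℝ => Fa z.1 * Fb z.2)
      (bivariateGaussian μj μk σjj σkk σjk)) :
    ∑' q : ℕ × ℕ, wa q.1 * wb q.2 * biZiplnPMF μj μk σjj σkk σjk πj πk q.1 q.2
      = ∫ z : ℝ × ℝ, Fa z.1 * Fb z.2 ∂(bivariateGaussian μj μk σjj σkk σjk) := by
  set ν := bivariateGaussian μj μk σjj σkk σjk with hν
  have hprob : IsProbabilityMeasure ν := bivariateGaussian_isProb _ _ _ _ _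
  set H : ℕ × ℕ → ℝ × ℝ → ℝ :=
    fun q z => (wa q.1 * zf πj z.1 q.1) * (wb q.2 * zf πk z.2 q.2) with hH
  have hHnn : ∀ q z, 0 ≤ H q z := fun q z =>
    mul_nonneg (mul_nonneg (hwa _) (zf_nonneg hπj _ _))
      (mul_nonneg (hwb _) (zf_nonneg hπk _ _))
  have hHm : ∀ q, Measurable (H q) := fun q =>
    (((zf_measurable πj q.1).comp measurable_fst).const_mul _).mul
      (((zf_measurable πk q.2).comp measurable_snd).const_mul _)
  have hpmf : ∀ q : ℕ × ℕ, biZiplnPMF μj μk σjj σkk σjk πj πk q.1 q.2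
      = ∫ z : ℝ × ℝ, zf πj z.1 q.1 * zf πk z.2 q.2 ∂ν := fun q => rfl
  have hzfm : ∀ q : ℕ × ℕ, Measurable (fun z : ℝ × ℝ => zf πj z.1 q.1 * zf πk z.2 q.2) :=
    fun q => ((zf_measurable πj q.1).comp measurable_fst).mul
      ((zf_measurable πk q.2).comp measurable_snd)
  have h1 : ∀ q : ℕ × ℕ, wa q.1 * wb q.2 * biZiplnPMF μj μk σjj σkk σjk πj πk q.1 q.2
      = (∫⁻ z, ENNReal.ofReal (H q z) ∂ν).toReal := by
    intro q
    rw [hpmf q, integral_eq_lintegral_of_nonneg_ae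
      (ae_of_all _ fun z => mul_nonneg (zf_nonneg hπj _ _) (zf_nonneg hπk _ _))
      (hzfm q).aestronglyMeasurable]
    rw [← ENNReal.toReal_ofReal (mul_nonneg (hwa q.1) (hwb q.2)), ← ENNReal.toReal_mul]
    congr 1
    rw [← lintegral_const_mul _ (hzfm q).ennreal_ofReal]
    apply lintegral_congr
    intro z
    rw [← ENNReal.ofReal_mul (mul_nonneg (hwa q.1) (hwb q.2))]
    congr 1
    simp only [hH]; ring
  have h2 : ∀ q : ℕ × ℕ, (∫⁻ z, ENNReal.ofReal (H q z) ∂ν) ≠ ⊤ := by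
    intro q
    have hb : ∀ z, ENNReal.ofReal (H q z) ≤ ENNReal.ofReal (wa q.1 * wb q.2) := by
      intro z
      apply ENNReal.ofReal_le_ofReal
      have ha' : wa q.1 * zf πj z.1 q.1 ≤ wa q.1 :=
        mul_le_of_le_one_right (hwa _) (zf_le_one hπj _ _)
      have hb' : wb q.2 * zf πk z.2 q.2 ≤ wb q.2 :=
        mul_le_of_le_one_right (hwb _) (zf_le_one hπk _ _)
      exact mul_le_mul ha' hb' (mul_nonneg (hwb _) (zf_nonneg hπk _ _)) (hwa _)
    have : (∫⁻ z, ENNReal.ofReal (H q z) ∂ν) ≤ ENNReal.ofReal (wa q.1 * wb q.2) := by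
      calc (∫⁻ z, ENNReal.ofReal (H q z) ∂ν)
          ≤ ∫⁻ _, ENNReal.ofReal (wa q.1 * wb q.2) ∂ν := lintegral_mono hb
        _ = ENNReal.ofReal (wa q.1 * wb q.2) := by simp [lintegral_const, measure_univ]
    exact ne_top_of_le_ne_top ENNReal.ofReal_ne_top this
  have hFann : ∀ x, 0 ≤ Fa x := fun x =>
    (hFa x).tsum_eq ▸ tsum_nonneg (fun a => mul_nonneg (hwa a) (zf_nonneg hπj x a))
  have hFbnn : ∀ x, 0 ≤ Fb x := fun x =>
    (hFb x).tsum_eq ▸ tsum_nonneg (fun b => mul_nonneg (hwb b) (zf_nonneg hπk x b))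
  calc ∑' q : ℕ × ℕ, wa q.1 * wb q.2 * biZiplnPMF μj μk σjj σkk σjk πj πk q.1 q.2
      = ∑' q : ℕ × ℕ, (∫⁻ z, ENNReal.ofReal (H q z) ∂ν).toReal := tsum_congr h1
    _ = (∑' q : ℕ × ℕ, ∫⁻ z, ENNReal.ofReal (H q z) ∂ν).toReal :=
        (ENNReal.tsum_toReal_eq h2).symm
    _ = (∫⁻ z, ∑' q : ℕ × ℕ, ENNReal.ofReal (H q z) ∂ν).toReal := by
        rw [lintegral_tsum (fun q => (hHm q).ennreal_ofReal.aemeasurable)]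
    _ = (∫⁻ z, ENNReal.ofReal (Fa z.1 * Fb z.2) ∂ν).toReal := by
        congr 1
        apply lintegral_congr
        intro z
        rw [ENNReal.tsum_prod']
        have : ∀ a b : ℕ, ENNReal.ofReal (H (a, b) z)
            = ENNReal.ofReal (wa a * zf πj z.1 a) * ENNReal.ofReal (wb b * zf πk z.2 b) :=
          fun a b => ENNReal.ofReal_mul (mul_nonneg (hwa a) (zf_nonneg hπj _ _))
        have hA : ∑' (a : ℕ), ENNReal.ofReal (wa a * zf πj z.1 a) = ENNReal.ofReal (Fa z.1) :=
          ((ENNReal.ofReal_tsum_of_nonneg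
            (fun a => mul_nonneg (hwa a) (zf_nonneg hπj _ _)) (hFa z.1).summable).symm).trans
            (congrArg ENNReal.ofReal (hFa z.1).tsum_eq)
        have hB : ∑' (b : ℕ), ENNReal.ofReal (wb b * zf πk z.2 b) = ENNReal.ofReal (Fb z.2) :=
          ((ENNReal.ofReal_tsum_of_nonneg
            (fun b => mul_nonneg (hwb b) (zf_nonneg hπk _ _)) (hFb z.2).summable).symm).trans
            (congrArg ENNReal.ofReal (hFb z.2).tsum_eq)
        simp only [this, ENNReal.tsum_mul_left, hB]
        rw [ENNReal.tsum_mul_right, hA, ← ENNReal.ofReal_mul (hFann z.1)]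
    _ = (ENNReal.ofReal (∫ z, Fa z.1 * Fb z.2 ∂ν)).toReal := by
        rw [← ofReal_integral_eq_lintegral_ofReal hInt
          (ae_of_all _ fun z => mul_nonneg (hFann z.1) (hFbnn z.2))]
    _ = ∫ z, Fa z.1 * Fb z.2 ∂ν :=
        ENNReal.toReal_ofReal (integral_nonneg (fun z => mul_nonneg (hFann z.1) (hFbnn z.2)))

section
variable {μj μk σjj σkk σjk : ℝ}

lemma T_meas : Measurable (fun uv : ℝ × ℝ =>
    (μj + Real.sqrt σjj * uv.1,
     μk + σjk / Real.sqrt σjj * uv.1 + Real.sqrt (σkk - σjk ^ 2 / σjj) * uv.2)) := by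
  fun_prop

lemma exp_comp_T (hjj : 0 < σjj) (s t : ℝ) (uv : ℝ × ℝ) :
    Real.exp (s * (μj + Real.sqrt σjj * uv.1)
        + t * (μk + σjk / Real.sqrt σjj * uv.1 + Real.sqrt (σkk - σjk ^ 2 / σjj) * uv.2))
      = Real.exp (s * μj + t * μk)
        * (Real.exp ((s * Real.sqrt σjj + t * σjk / Real.sqrt σjj) * uv.1)
          * Real.exp ((t * Real.sqrt (σkk - σjk ^ 2 / σjj)) * uv.2)) := by
  rw [← Real.exp_add, ← Real.exp_add]
  congr 1
  ring

lemma integrable_exp_biv (hjj : 0 < σjj) (s t : ℝ) :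
    Integrable (fun z : ℝ × ℝ => Real.exp (s * z.1 + t * z.2))
      (bivariateGaussian μj μk σjj σkk σjk) := by
  unfold bivariateGaussian
  rw [integrable_map_measure
    (Measurable.aestronglyMeasurable (by fun_prop : Measurable fun z : ℝ × ℝ => Real.exp (s * z.1 + t * z.2)))
    T_meas.aemeasurable]
  have : ((fun z : ℝ × ℝ => Real.exp (s * z.1 + t * z.2)) ∘
      (fun uv : ℝ × ℝ =>
        (μj + Real.sqrt σjj * uv.1,
         μk + σjk / Real.sqrt σjj * uv.1 + Real.sqrt (σkk - σjk ^ 2 / σjj) * uv.2)))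
      = fun uv : ℝ × ℝ => Real.exp (s * μj + t * μk)
        * (Real.exp ((s * Real.sqrt σjj + t * σjk / Real.sqrt σjj) * uv.1)
          * Real.exp ((t * Real.sqrt (σkk - σjk ^ 2 / σjj)) * uv.2)) := by
    funext uv
    exact exp_comp_T hjj s t uv
  rw [this]
  exact ((integrable_exp_std _).mul_prod (integrable_exp_std _)).const_mul _

lemma integral_exp_biv (hjj : 0 < σjj) (hkk : 0 ≤ σkk - σjk ^ 2 / σjj) (s t : ℝ) :
    ∫ z : ℝ × ℝ, Real.exp (s * z.1 + t * z.2) ∂(bivariateGaussian μj μk σjj σkk σjk)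
      = Real.exp (s * μj + t * μk
          + (s ^ 2 * σjj + 2 * s * t * σjk + t ^ 2 * σkk) / 2) := by
  unfold bivariateGaussian
  rw [integral_map T_meas.aemeasurable
    (Measurable.aestronglyMeasurable (by fun_prop : Measurable fun z : ℝ × ℝ => Real.exp (s * z.1 + t * z.2)))]
  simp only [exp_comp_T hjj s t]
  rw [MeasureTheory.integral_const_mul,
    integral_prod_mul (fun u => Real.exp ((s * Real.sqrt σjj + t * σjk / Real.sqrt σjj) * u))
      (fun v => Real.exp ((t * Real.sqrt (σkk - σjk ^ 2 / σjj)) * v)),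
    integral_exp_std, integral_exp_std, ← Real.exp_add, ← Real.exp_add]
  congr 1
  set r := Real.sqrt σjj with hrdef
  have hr : r ^ 2 = σjj := Real.sq_sqrt hjj.le
  have hr0 : r ≠ 0 := (Real.sqrt_pos.mpr hjj).ne'
  set d := Real.sqrt (σkk - σjk ^ 2 / σjj) with hddef
  have hd : d ^ 2 = σkk - σjk ^ 2 / σjj := Real.sq_sqrt hkk
  have hσkk : σkk = d ^ 2 + σjk ^ 2 / r ^ 2 := by
    rw [hd, hr]; ring
  rw [hσkk, ← hr]
  field_simp
  ring
end


theorem bi_zipln_covariance (μj μk σjj σkk σjk πj πk : ℝ)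
    (hjj : 0 < σjj) (hkk : 0 ≤ σkk - σjk ^ 2 / σjj)
    (hπj : πj ∈ Set.Icc (0:ℝ) 1) (hπk : πk ∈ Set.Icc (0:ℝ) 1) :
    let Aj : ℝ := Real.exp (μj + σjj / 2)
    let Ak : ℝ := Real.exp (μk + σkk / 2)
    (∑' q : ℕ × ℕ, (q.1 : ℝ) * (q.2 : ℝ) * biZiplnPMF μj μk σjj σkk σjk πj πk q.1 q.2)
      - (∑' q : ℕ × ℕ, (q.1 : ℝ) * biZiplnPMF μj μk σjj σkk σjk πj πk q.1 q.2)
        * (∑' q : ℕ × ℕ, (q.2 : ℝ) * biZiplnPMF μj μk σjj σkk σjk πj πk q.1 q.2)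
      = (1 - πj) * (1 - πk) * Aj * Ak * (Real.exp σjk - 1) := by
  intro Aj Ak
  set ν := bivariateGaussian μj μk σjj σkk σjk with hν
  have hcastnn : ∀ n : ℕ, (0:ℝ) ≤ (n:ℝ) := fun n => Nat.cast_nonneg n
  have honenn : ∀ _ : ℕ, (0:ℝ) ≤ (1:ℝ) := fun _ => zero_le_one
  have hFaj : ∀ x, HasSum (fun a : ℕ => (a:ℝ) * zf πj x a) ((1 - πj) * Real.exp x) :=
    zf_hasSum_mul πj
  have hFak : ∀ x, HasSum (fun a : ℕ => (a:ℝ) * zf πk x a) ((1 - πk) * Real.exp x) :=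
    zf_hasSum_mul πk
  have hOnej : ∀ x, HasSum (fun b : ℕ => (1:ℝ) * zf πj x b) 1 := fun x => by
    simpa using zf_hasSum πj x
  have hOnek : ∀ x, HasSum (fun b : ℕ => (1:ℝ) * zf πk x b) 1 := fun x => by
    simpa using zf_hasSum πk x
  -- the three integrand identities
  have heq1 : (fun z : ℝ × ℝ => ((1 - πj) * Real.exp z.1) * ((1 - πk) * Real.exp z.2))
      = fun z : ℝ × ℝ => ((1 - πj) * (1 - πk)) * Real.exp (1 * z.1 + 1 * z.2) := by
    funext z
    rw [show (1:ℝ) * z.1 + 1 * z.2 = z.1 + z.2 by ring, Real.exp_add]; ring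
  have heq2 : (fun z : ℝ × ℝ => ((1 - πj) * Real.exp z.1) * (1:ℝ))
      = fun z : ℝ × ℝ => (1 - πj) * Real.exp (1 * z.1 + 0 * z.2) := by
    funext z
    rw [show (1:ℝ) * z.1 + 0 * z.2 = z.1 by ring]; ring
  have heq3 : (fun z : ℝ × ℝ => (1:ℝ) * ((1 - πk) * Real.exp z.2))
      = fun z : ℝ × ℝ => (1 - πk) * Real.exp (0 * z.1 + 1 * z.2) := by
    funext z
    rw [show (0:ℝ) * z.1 + 1 * z.2 = z.2 by ring]; ring
  have hInt1 : Integrable (fun z : ℝ × ℝ => ((1 - πj) * Real.exp z.1)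
      * ((1 - πk) * Real.exp z.2)) ν := by
    rw [heq1]; exact (integrable_exp_biv hjj 1 1).const_mul _
  have hInt2 : Integrable (fun z : ℝ × ℝ => ((1 - πj) * Real.exp z.1) * (1:ℝ)) ν := by
    rw [heq2]; exact (integrable_exp_biv hjj 1 0).const_mul _
  have hInt3 : Integrable (fun z : ℝ × ℝ => (1:ℝ) * ((1 - πk) * Real.exp z.2)) ν := by
    rw [heq3]; exact (integrable_exp_biv hjj 0 1).const_mul _
  have hS1 : (∑' q : ℕ × ℕ, (q.1 : ℝ) * (q.2 : ℝ) * biZiplnPMF μj μk σjj σkk σjk πj πk q.1 q.2)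
      = ((1 - πj) * (1 - πk)) * Real.exp (1 * μj + 1 * μk
          + ((1:ℝ) ^ 2 * σjj + 2 * 1 * 1 * σjk + (1:ℝ) ^ 2 * σkk) / 2) := by
    rw [master μj μk σjj σkk σjk πj πk hπj hπk _ _ hcastnn hcastnn _ _ hFaj hFak hInt1,
      heq1, MeasureTheory.integral_const_mul, integral_exp_biv hjj hkk 1 1]
  have hS2 : (∑' q : ℕ × ℕ, (q.1 : ℝ) * biZiplnPMF μj μk σjj σkk σjk πj πk q.1 q.2)
      = (1 - πj) * Real.exp (1 * μj + 0 * μk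
          + ((1:ℝ) ^ 2 * σjj + 2 * 1 * 0 * σjk + (0:ℝ) ^ 2 * σkk) / 2) := by
    rw [show (∑' q : ℕ × ℕ, (q.1 : ℝ) * biZiplnPMF μj μk σjj σkk σjk πj πk q.1 q.2)
        = ∑' q : ℕ × ℕ, (q.1 : ℝ) * 1 * biZiplnPMF μj μk σjj σkk σjk πj πk q.1 q.2 from
      tsum_congr fun q => by ring]
    rw [master μj μk σjj σkk σjk πj πk hπj hπk _ _ hcastnn honenn _ _ hFaj hOnek hInt2,
      heq2, MeasureTheory.integral_const_mul, integral_exp_biv hjj hkk 1 0]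
  have hS3 : (∑' q : ℕ × ℕ, (q.2 : ℝ) * biZiplnPMF μj μk σjj σkk σjk πj πk q.1 q.2)
      = (1 - πk) * Real.exp (0 * μj + 1 * μk
          + ((0:ℝ) ^ 2 * σjj + 2 * 0 * 1 * σjk + (1:ℝ) ^ 2 * σkk) / 2) := by
    rw [show (∑' q : ℕ × ℕ, (q.2 : ℝ) * biZiplnPMF μj μk σjj σkk σjk πj πk q.1 q.2)
        = ∑' q : ℕ × ℕ, (1:ℝ) * (q.2 : ℝ) * biZiplnPMF μj μk σjj σkk σjk πj πk q.1 q.2 from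
      tsum_congr fun q => by ring]
    rw [master μj μk σjj σkk σjk πj πk hπj hπk _ _ honenn hcastnn _ _ hOnej hFak hInt3,
      heq3, MeasureTheory.integral_const_mul, integral_exp_biv hjj hkk 0 1]
  rw [hS1, hS2, hS3]
  rw [show (1:ℝ) * μj + 1 * μk + ((1:ℝ) ^ 2 * σjj + 2 * 1 * 1 * σjk + (1:ℝ) ^ 2 * σkk) / 2
      = (μj + σjj / 2) + ((μk + σkk / 2) + σjk) by ring,
    Real.exp_add (μj + σjj / 2) ((μk + σkk / 2) + σjk), Real.exp_add (μk + σkk / 2) σjk]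
  rw [show (1:ℝ) * μj + 0 * μk + ((1:ℝ) ^ 2 * σjj + 2 * 1 * 0 * σjk + (0:ℝ) ^ 2 * σkk) / 2
      = μj + σjj / 2 by ring]
  rw [show (0:ℝ) * μj + 1 * μk + ((0:ℝ) ^ 2 * σjj + 2 * 0 * 1 * σjk + (1:ℝ) ^ 2 * σkk) / 2
      = μk + σkk / 2 by ring]
  show ((1 - πj) * (1 - πk)) * (Aj * (Ak * Real.exp σjk))
      - (1 - πj) * Aj * ((1 - πk) * Ak) = (1 - πj) * (1 - πk) * Aj * Ak * (Real.exp σjk - 1)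
  ring
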